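/- Let n ≥ 2 and let G be the anticycle on the n+3 vertices x, z_1, z_2, y_1,…,y_n, with J = I(H) the edge ideal of the induced antipath H = G \ {x}. Fix 1 ≤ i ≤ j ≤ n with (i,j) ≠ (1,1), and let I' = J^2 + (x z_1 z_2 y_l : 1 ≤ l ≤ n) + ( x y_k y_l z_2 : 1 ≤ k ≤ l ≤ n, (k,l) ≠ (n,n) ) + ( x y_{i'} y_{j'} z_1 : 1 ≤ i' ≤ j' ≤ n, (i',j') ≠ (1,1), (j',i') strictly dictionary-greater than (j,i) ). Then the colon ideal I' : (x y_i y_j z_1) is generated by a subset of the variables of R. -/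

import Mathlib

open MvPolynomial

set_option maxHeartbeats 1000000

/-! The anticycle `G` on the `n+3` vertices `x, z₁, y₁, …, y_n, z₂`, realized on `Fin (n+3)`
with the cycle labeling `x = 0`, `z₁ = 1`, `y_i = i+1` (so `y_i` has index `i+2` for the
0-indexed `i : Fin n`), `z₂ = n+2`.  The non-edges of `G` are exactly the consecutive pairs
on the cycle `x ∼ z₁ ∼ y₁ ∼ ⋯ ∼ y_n ∼ z₂ ∼ x`. -/

def vx (n : ℕ) : Fin (n + 3) := ⟨0, by omega⟩
def vz1 (n : ℕ) : Fin (n + 3) := ⟨1, by omega⟩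
def vz2 (n : ℕ) : Fin (n + 3) := ⟨n + 2, by omega⟩
def vy (n : ℕ) (i : Fin n) : Fin (n + 3) := ⟨(i : ℕ) + 2, by omega⟩

noncomputable def Jideal (K : Type*) [Field K] (n : ℕ) :
    Ideal (MvPolynomial (Fin (n + 3)) K) :=
  Ideal.span { m | ∃ a b : Fin (n + 3),
    1 ≤ (a : ℕ) ∧ (a : ℕ) + 2 ≤ (b : ℕ) ∧ m = X a * X b }


@[simp] lemma vx_val (n : ℕ) : ((vx n : Fin (n+3)) : ℕ) = 0 := rfl
@[simp] lemma vz1_val (n : ℕ) : ((vz1 n : Fin (n+3)) : ℕ) = 1 := rfl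
@[simp] lemma vz2_val (n : ℕ) : ((vz2 n : Fin (n+3)) : ℕ) = n + 2 := rfl
@[simp] lemma vy_val (n : ℕ) (l : Fin n) : ((vy n l : Fin (n+3)) : ℕ) = (l : ℕ) + 2 := rfl

noncomputable def sg {n : ℕ} (v : Fin (n + 3)) : Fin (n + 3) →₀ ℕ := Finsupp.single v 1

@[simp] lemma sg_apply {n : ℕ} (u w : Fin (n+3)) :
    (sg u) w = if (u : ℕ) = (w : ℕ) then 1 else 0 := by
  rw [sg, Finsupp.single_apply]
  simp [Fin.ext_iff]

noncomputable def GenSet (n : ℕ) (i j : Fin n) : Set (Fin (n + 3) →₀ ℕ) :=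
  (({g | ∃ a b c d : Fin (n + 3), 1 ≤ (a : ℕ) ∧ (a : ℕ) + 2 ≤ (b : ℕ) ∧
        1 ≤ (c : ℕ) ∧ (c : ℕ) + 2 ≤ (d : ℕ) ∧ g = sg a + sg b + sg c + sg d} ∪
    {g | ∃ l : Fin n, g = sg (vx n) + sg (vz1 n) + sg (vz2 n) + sg (vy n l)}) ∪
    {g | ∃ k l : Fin n, k ≤ l ∧ ¬((k : ℕ) = n - 1 ∧ (l : ℕ) = n - 1) ∧
        g = sg (vx n) + sg (vy n k) + sg (vy n l) + sg (vz2 n)}) ∪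
    {g | ∃ i' j' : Fin n, i' ≤ j' ∧ ¬((i' : ℕ) = 0 ∧ (j' : ℕ) = 0) ∧
        (j < j' ∨ (j' = j ∧ i < i')) ∧
        g = sg (vx n) + sg (vy n i') + sg (vy n j') + sg (vz1 n)}

/-- The exponent vector of the monomial `x y_i y_j z₁`. -/
noncomputable def muE (n : ℕ) (i j : Fin n) : Fin (n + 3) →₀ ℕ :=
  sg (vx n) + sg (vy n i) + sg (vy n j) + sg (vz1 n)

/-- The set of variables generating the colon ideal. -/
def VarSet (n : ℕ) (i j : Fin n) : Set (Fin (n + 3)) :=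
  {v | (v : ℕ) = n + 2 ∨ ((v : ℕ) = 1 ∧ 1 ≤ (i : ℕ)) ∨
    (2 ≤ (v : ℕ) ∧ (v : ℕ) ≤ n + 1 ∧
      ((i : ℕ) + 2 < (v : ℕ) ∨
        ((v : ℕ) ≤ (j : ℕ) ∧ ((v : ℕ) = (i : ℕ) + 2 → 1 ≤ (i : ℕ)))))}


lemma sg_apply_eq {n : ℕ} {u w : Fin (n+3)} (h : (u : ℕ) = (w : ℕ)) : (sg u) w = 1 := by
  rw [sg, Finsupp.single_apply, if_pos (Fin.ext h)]

lemma sg_apply_ne {n : ℕ} {u w : Fin (n+3)} (h : (u : ℕ) ≠ (w : ℕ)) : (sg u) w = 0 := by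
  rw [sg, Finsupp.single_apply, if_neg (fun hc => h (congrArg Fin.val hc))]

lemma mem_VarSet {n : ℕ} {i j : Fin n} {v : Fin (n+3)} :
    v ∈ VarSet n i j ↔ ((v : ℕ) = n + 2 ∨ ((v : ℕ) = 1 ∧ 1 ≤ (i : ℕ)) ∨
    (2 ≤ (v : ℕ) ∧ (v : ℕ) ≤ n + 1 ∧
      ((i : ℕ) + 2 < (v : ℕ) ∨
        ((v : ℕ) ≤ (j : ℕ) ∧ ((v : ℕ) = (i : ℕ) + 2 → 1 ≤ (i : ℕ)))))) := Iff.rfl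

lemma X_mul_X {K : Type*} [Field K] {n : ℕ} (a b : Fin (n + 3)) :
    (X a * X b : MvPolynomial (Fin (n + 3)) K) = monomial (sg a + sg b) 1 := by
  have hX1 : ∀ u : Fin (n+3), (X u : MvPolynomial (Fin (n+3)) K)
      = monomial (sg u) 1 := fun u => rfl
  rw [hX1, hX1, monomial_mul, one_mul]

lemma X_mul_four {K : Type*} [Field K] {n : ℕ} (a b c d : Fin (n + 3)) :
    (X a * X b * X c * X d : MvPolynomial (Fin (n + 3)) K)
      = monomial (sg a + sg b + sg c + sg d) 1 := by
  have hX1 : ∀ u : Fin (n+3), (X u : MvPolynomial (Fin (n+3)) K)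
      = monomial (sg u) 1 := fun u => rfl
  rw [hX1, hX1, hX1, hX1, monomial_mul, monomial_mul, monomial_mul, one_mul, one_mul, one_mul]

lemma spanEq (K : Type*) [Field K] (n : ℕ) (i j : Fin n) :
    (Jideal K n ^ 2 +
          Ideal.span { m | ∃ l : Fin n,
            m = X (vx n) * X (vz1 n) * X (vz2 n) * X (vy n l) } +
          Ideal.span { m | ∃ k l : Fin n, k ≤ l ∧
            ¬((k : ℕ) = n - 1 ∧ (l : ℕ) = n - 1) ∧
            m = X (vx n) * X (vy n k) * X (vy n l) * X (vz2 n) } +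
          Ideal.span { m | ∃ i' j' : Fin n, i' ≤ j' ∧
            ¬((i' : ℕ) = 0 ∧ (j' : ℕ) = 0) ∧
            (j < j' ∨ (j' = j ∧ i < i')) ∧
            m = X (vx n) * X (vy n i') * X (vy n j') * X (vz1 n) })
      = Ideal.span ((fun g => monomial g (1 : K)) '' GenSet n i j) := by
  unfold Jideal
  rw [pow_two, Ideal.span_mul_span', Ideal.add_eq_sup, Ideal.add_eq_sup, Ideal.add_eq_sup,
    ← Ideal.span_union, ← Ideal.span_union, ← Ideal.span_union]
  congr 1
  ext q
  simp only [Set.mem_union, Set.mem_setOf_eq, Set.mem_image, Set.mem_mul, GenSet]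
  constructor
  · rintro (((⟨m1, ⟨a, b, ha, hab, rfl⟩, m2, ⟨c, d, hc, hcd, rfl⟩, rfl⟩ | ⟨l, rfl⟩) |
      ⟨k, l, hkl, hne, rfl⟩) | ⟨i', j', h1, h2, h3, rfl⟩)
    · exact ⟨sg a + sg b + sg c + sg d,
        Or.inl (Or.inl (Or.inl ⟨a, b, c, d, ha, hab, hc, hcd, rfl⟩)),
        by rw [X_mul_X, X_mul_X, monomial_mul, one_mul, add_assoc]⟩
    · exact ⟨_, Or.inl (Or.inl (Or.inr ⟨l, rfl⟩)), (X_mul_four _ _ _ _).symm⟩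
    · exact ⟨_, Or.inl (Or.inr ⟨k, l, hkl, hne, rfl⟩), (X_mul_four _ _ _ _).symm⟩
    · exact ⟨_, Or.inr ⟨i', j', h1, h2, h3, rfl⟩, (X_mul_four _ _ _ _).symm⟩
  · rintro ⟨g, (((⟨a, b, c, d, ha, hab, hc, hcd, rfl⟩ | ⟨l, rfl⟩) |
      ⟨k, l, hkl, hne, rfl⟩) | ⟨i', j', h1, h2, h3, rfl⟩), rfl⟩
    · exact Or.inl (Or.inl (Or.inl ⟨X a * X b, ⟨a, b, ha, hab, rfl⟩,
        X c * X d, ⟨c, d, hc, hcd, rfl⟩,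
        by rw [X_mul_X, X_mul_X, monomial_mul, one_mul]; congr 1; abel⟩))
    · exact Or.inl (Or.inl (Or.inr ⟨l, (X_mul_four _ _ _ _).symm⟩))
    · exact Or.inl (Or.inr ⟨k, l, hkl, hne, (X_mul_four _ _ _ _).symm⟩)
    · exact Or.inr ⟨i', j', h1, h2, h3, (X_mul_four _ _ _ _).symm⟩

lemma keyA (n : ℕ) (hn : 2 ≤ n) (i j : Fin n) (hij : i ≤ j)
    (h11 : ¬((i : ℕ) = 0 ∧ (j : ℕ) = 0)) :
    ∀ g ∈ GenSet n i j, ∃ v ∈ VarSet n i j, muE n i j v < g v := by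
  have hi0 := i.isLt
  have hj0 := j.isLt
  have hijn0 : (i : ℕ) ≤ (j : ℕ) := hij
  have hmu : ∀ v : Fin (n+3), muE n i j v =
      (sg (vx n)) v + (sg (vy n i)) v + (sg (vy n j)) v + (sg (vz1 n)) v := by
    intro v; rw [muE, Finsupp.add_apply, Finsupp.add_apply, Finsupp.add_apply]
  have hg4 : ∀ p q r s : Fin (n+3), ∀ v : Fin (n+3), (sg p + sg q + sg r + sg s) v =
      (sg p) v + (sg q) v + (sg r) v + (sg s) v := by
    intro p q r s v; rw [Finsupp.add_apply, Finsupp.add_apply, Finsupp.add_apply]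
  intro g hg
  rcases hg with ((⟨a, b, c, d, ha, hab, hc, hcd, rfl⟩ | ⟨l, rfl⟩) |
    ⟨k, l, hkl, hne, rfl⟩) | ⟨i', j', h1, h2, h3, rfl⟩
  · -- J² generators: contradiction argument
    by_contra hcon0
    push_neg at hcon0
    have hcon : ∀ v ∈ VarSet n i j, (sg a + sg b + sg c + sg d) v ≤ muE n i j v := hcon0
    clear hcon0
    revert hcon
    intro hcon

    have hi := i.isLt
    have hj := j.isLt
    have hb := b.isLt
    have hd := d.isLt
    have hj1 : 1 ≤ (j : ℕ) := by omega
    -- the evaluation helper: at a vertex v, evaluate the μ-side and relevant LHS entries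
    have hmu : ∀ v : Fin (n+3), muE n i j v =
        (sg (vx n)) v + (sg (vy n i)) v + (sg (vy n j)) v + (sg (vz1 n)) v := by
      intro v; rw [muE, Finsupp.add_apply, Finsupp.add_apply, Finsupp.add_apply]
    have hg : ∀ v : Fin (n+3), (sg a + sg b + sg c + sg d) v =
        (sg a) v + (sg b) v + (sg c) v + (sg d) v := by
      intro v; rw [Finsupp.add_apply, Finsupp.add_apply, Finsupp.add_apply]
    -- b ≠ n+2 and d ≠ n+2
    have hbn : (b : ℕ) ≠ n + 2 := by
      intro he
      have h := hcon (vz2 n) (mem_VarSet.mpr (Or.inl rfl))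
      rw [hg, hmu, sg_apply_ne (u := vx n) (by simp only [vx_val, vz1_val, vz2_val, vy_val]; omega),
        sg_apply_ne (u := vy n i) (by simp only [vx_val, vz1_val, vz2_val, vy_val]; omega), sg_apply_ne (u := vy n j) (by simp only [vx_val, vz1_val, vz2_val, vy_val]; omega),
        sg_apply_ne (u := vz1 n) (by simp only [vx_val, vz1_val, vz2_val, vy_val]; omega), sg_apply_eq (u := b) (by simp only [vx_val, vz1_val, vz2_val, vy_val]; omega)] at h
      omega
    have hdn : (d : ℕ) ≠ n + 2 := by
      intro he
      have h := hcon (vz2 n) (mem_VarSet.mpr (Or.inl rfl))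
      rw [hg, hmu, sg_apply_ne (u := vx n) (by simp only [vx_val, vz1_val, vz2_val, vy_val]; omega),
        sg_apply_ne (u := vy n i) (by simp only [vx_val, vz1_val, vz2_val, vy_val]; omega), sg_apply_ne (u := vy n j) (by simp only [vx_val, vz1_val, vz2_val, vy_val]; omega),
        sg_apply_ne (u := vz1 n) (by simp only [vx_val, vz1_val, vz2_val, vy_val]; omega), sg_apply_eq (u := d) (by simp only [vx_val, vz1_val, vz2_val, vy_val]; omega)] at h
      omega
    -- generic deduction: v-instantiation with evaluated mu side
    by_cases hij2 : (i : ℕ) = (j : ℕ)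
    · -- case i = j, 1 ≤ i
      have hi1 : 1 ≤ (i : ℕ) := by omega
      have hB : (b : ℕ) = (i : ℕ) + 1 ∨ (b : ℕ) = (i : ℕ) + 2 := by
        by_contra hcb; push_neg at hcb
        have h := hcon b (mem_VarSet.mpr (by omega))
        rw [hg, hmu, sg_apply_ne (u := vx n) (by simp only [vx_val]; omega),
          sg_apply_ne (u := vy n i) (by simp only [vy_val]; omega),
          sg_apply_ne (u := vy n j) (by simp only [vy_val]; omega),
          sg_apply_ne (u := vz1 n) (by simp only [vz1_val]; omega),
          sg_apply_eq (u := b) rfl] at h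
        omega
      have hD : (d : ℕ) = (i : ℕ) + 1 ∨ (d : ℕ) = (i : ℕ) + 2 := by
        by_contra hcb; push_neg at hcb
        have h := hcon d (mem_VarSet.mpr (by omega))
        rw [hg, hmu, sg_apply_ne (u := vx n) (by simp only [vx_val]; omega),
          sg_apply_ne (u := vy n i) (by simp only [vy_val]; omega),
          sg_apply_ne (u := vy n j) (by simp only [vy_val]; omega),
          sg_apply_ne (u := vz1 n) (by simp only [vz1_val]; omega),
          sg_apply_eq (u := d) rfl] at h
        omega
      have hA : (a : ℕ) = 1 := by
        by_contra hca
        have h := hcon a (mem_VarSet.mpr (by omega))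
        rw [hg, hmu, sg_apply_ne (u := vx n) (by simp only [vx_val]; omega),
          sg_apply_ne (u := vy n i) (by simp only [vy_val]; omega),
          sg_apply_ne (u := vy n j) (by simp only [vy_val]; omega),
          sg_apply_ne (u := vz1 n) (by simp only [vz1_val]; omega),
          sg_apply_eq (u := a) rfl] at h
        omega
      have hC : (c : ℕ) = 1 := by
        by_contra hca
        have h := hcon c (mem_VarSet.mpr (by omega))
        rw [hg, hmu, sg_apply_ne (u := vx n) (by simp only [vx_val]; omega),
          sg_apply_ne (u := vy n i) (by simp only [vy_val]; omega),
          sg_apply_ne (u := vy n j) (by simp only [vy_val]; omega),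
          sg_apply_ne (u := vz1 n) (by simp only [vz1_val]; omega),
          sg_apply_eq (u := c) rfl] at h
        omega
      have h := hcon (vz1 n) (mem_VarSet.mpr (Or.inr (Or.inl ⟨rfl, by omega⟩)))
      rw [hg, hmu, sg_apply_ne (u := vx n) (by simp only [vx_val, vz1_val]; omega),
        sg_apply_ne (u := vy n i) (by simp only [vy_val, vz1_val]; omega),
        sg_apply_ne (u := vy n j) (by simp only [vy_val, vz1_val]; omega),
        sg_apply_eq (u := vz1 n) rfl,
        sg_apply_eq (u := a) (by simp only [vz1_val]; omega),
        sg_apply_eq (u := c) (by simp only [vz1_val]; omega)] at h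
      omega
    · have hij3 : (i : ℕ) < (j : ℕ) := by omega
      by_cases hi0 : (i : ℕ) = 0
      · -- case i = 0 < j
        have hB : (b : ℕ) = (j : ℕ) + 2 := by
          by_contra hcb
          have h := hcon b (mem_VarSet.mpr (by omega))
          rw [hg, hmu, sg_apply_ne (u := vx n) (by simp only [vx_val]; omega),
            sg_apply_ne (u := vy n i) (by simp only [vy_val]; omega),
            sg_apply_ne (u := vy n j) (by simp only [vy_val]; omega),
            sg_apply_ne (u := vz1 n) (by simp only [vz1_val]; omega),
            sg_apply_eq (u := b) rfl] at h
          omega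
        have hD : (d : ℕ) = (j : ℕ) + 2 := by
          by_contra hcb
          have h := hcon d (mem_VarSet.mpr (by omega))
          rw [hg, hmu, sg_apply_ne (u := vx n) (by simp only [vx_val]; omega),
            sg_apply_ne (u := vy n i) (by simp only [vy_val]; omega),
            sg_apply_ne (u := vy n j) (by simp only [vy_val]; omega),
            sg_apply_ne (u := vz1 n) (by simp only [vz1_val]; omega),
            sg_apply_eq (u := d) rfl] at h
          omega
        have h := hcon b (mem_VarSet.mpr (by omega))
        rw [hg, hmu, sg_apply_ne (u := vx n) (by simp only [vx_val]; omega),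
          sg_apply_ne (u := vy n i) (by simp only [vy_val]; omega),
          sg_apply_eq (u := vy n j) (by simp only [vy_val]; omega),
          sg_apply_ne (u := vz1 n) (by simp only [vz1_val]; omega),
          sg_apply_eq (u := b) rfl,
          sg_apply_eq (u := d) (w := b) (by omega)] at h
        omega
      · have hi1 : 1 ≤ (i : ℕ) := by omega
        by_cases hjj : (i : ℕ) + 2 ≤ (j : ℕ)
        · -- case 1 ≤ i, i + 2 ≤ j
          have hB : (b : ℕ) = (i : ℕ) + 2 ∨ (b : ℕ) = (j : ℕ) + 2 := by
            by_contra hcb; push_neg at hcb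
            have h := hcon b (mem_VarSet.mpr (by omega))
            rw [hg, hmu, sg_apply_ne (u := vx n) (by simp only [vx_val]; omega),
              sg_apply_ne (u := vy n i) (by simp only [vy_val]; omega),
              sg_apply_ne (u := vy n j) (by simp only [vy_val]; omega),
              sg_apply_ne (u := vz1 n) (by simp only [vz1_val]; omega),
              sg_apply_eq (u := b) rfl] at h
            omega
          have hD : (d : ℕ) = (i : ℕ) + 2 ∨ (d : ℕ) = (j : ℕ) + 2 := by
            by_contra hcb; push_neg at hcb
            have h := hcon d (mem_VarSet.mpr (by omega))
            rw [hg, hmu, sg_apply_ne (u := vx n) (by simp only [vx_val]; omega),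
              sg_apply_ne (u := vy n i) (by simp only [vy_val]; omega),
              sg_apply_ne (u := vy n j) (by simp only [vy_val]; omega),
              sg_apply_ne (u := vz1 n) (by simp only [vz1_val]; omega),
              sg_apply_eq (u := d) rfl] at h
            omega
          have hA : (a : ℕ) = 1 ∨ (a : ℕ) = (i : ℕ) + 2 := by
            by_contra hca; push_neg at hca
            have h := hcon a (mem_VarSet.mpr (by omega))
            rw [hg, hmu, sg_apply_ne (u := vx n) (by simp only [vx_val]; omega),
              sg_apply_ne (u := vy n i) (by simp only [vy_val]; omega),
              sg_apply_ne (u := vy n j) (by simp only [vy_val]; omega),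
              sg_apply_ne (u := vz1 n) (by simp only [vz1_val]; omega),
              sg_apply_eq (u := a) rfl] at h
            omega
          have hC : (c : ℕ) = 1 ∨ (c : ℕ) = (i : ℕ) + 2 := by
            by_contra hca; push_neg at hca
            have h := hcon c (mem_VarSet.mpr (by omega))
            rw [hg, hmu, sg_apply_ne (u := vx n) (by simp only [vx_val]; omega),
              sg_apply_ne (u := vy n i) (by simp only [vy_val]; omega),
              sg_apply_ne (u := vy n j) (by simp only [vy_val]; omega),
              sg_apply_ne (u := vz1 n) (by simp only [vz1_val]; omega),
              sg_apply_eq (u := c) rfl] at h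
            omega
          rcases hB with hb' | hb'
          · -- b = i+2 forces a = 1 ; then d = i+2 clashes with b, or d = j+2 and c clashes
            have ha' : (a : ℕ) = 1 := by omega
            rcases hD with hd' | hd'
            · -- b = d = i+2
              have h := hcon b (mem_VarSet.mpr (by omega))
              rw [hg, hmu, sg_apply_ne (u := vx n) (by simp only [vx_val]; omega),
                sg_apply_eq (u := vy n i) (by simp only [vy_val]; omega),
                sg_apply_ne (u := vy n j) (by simp only [vy_val]; omega),
                sg_apply_ne (u := vz1 n) (by simp only [vz1_val]; omega),
                sg_apply_eq (u := b) rfl, sg_apply_eq (u := d) (w := b) (by omega)] at h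
              omega
            · rcases hC with hc' | hc'
              · -- a = c = 1
                have h := hcon (vz1 n) (mem_VarSet.mpr (Or.inr (Or.inl ⟨rfl, by omega⟩)))
                rw [hg, hmu, sg_apply_ne (u := vx n) (by simp only [vx_val, vz1_val]; omega),
                  sg_apply_ne (u := vy n i) (by simp only [vy_val, vz1_val]; omega),
                  sg_apply_ne (u := vy n j) (by simp only [vy_val, vz1_val]; omega),
                  sg_apply_eq (u := vz1 n) rfl,
                  sg_apply_eq (u := a) (by simp only [vz1_val]; omega),
                  sg_apply_eq (u := c) (by simp only [vz1_val]; omega)] at h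
                omega
              · -- b = c = i+2
                have h := hcon b (mem_VarSet.mpr (by omega))
                rw [hg, hmu, sg_apply_ne (u := vx n) (by simp only [vx_val]; omega),
                  sg_apply_eq (u := vy n i) (by simp only [vy_val]; omega),
                  sg_apply_ne (u := vy n j) (by simp only [vy_val]; omega),
                  sg_apply_ne (u := vz1 n) (by simp only [vz1_val]; omega),
                  sg_apply_eq (u := b) rfl, sg_apply_eq (u := c) (w := b) (by omega)] at h
                omega
          · rcases hD with hd' | hd'
            · -- d = i+2 forces c = 1; a clashes with c or with d
              have hc'' : (c : ℕ) = 1 := by omega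
              rcases hA with ha' | ha'
              · have h := hcon (vz1 n) (mem_VarSet.mpr (Or.inr (Or.inl ⟨rfl, by omega⟩)))
                rw [hg, hmu, sg_apply_ne (u := vx n) (by simp only [vx_val, vz1_val]; omega),
                  sg_apply_ne (u := vy n i) (by simp only [vy_val, vz1_val]; omega),
                  sg_apply_ne (u := vy n j) (by simp only [vy_val, vz1_val]; omega),
                  sg_apply_eq (u := vz1 n) rfl,
                  sg_apply_eq (u := a) (by simp only [vz1_val]; omega),
                  sg_apply_eq (u := c) (by simp only [vz1_val]; omega)] at h
                omega
              · -- a = d = i+2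
                have h := hcon d (mem_VarSet.mpr (by omega))
                rw [hg, hmu, sg_apply_ne (u := vx n) (by simp only [vx_val]; omega),
                  sg_apply_eq (u := vy n i) (by simp only [vy_val]; omega),
                  sg_apply_ne (u := vy n j) (by simp only [vy_val]; omega),
                  sg_apply_ne (u := vz1 n) (by simp only [vz1_val]; omega),
                  sg_apply_eq (u := d) rfl, sg_apply_eq (u := a) (w := d) (by omega)] at h
                omega
            · -- b = d = j+2
              have h := hcon b (mem_VarSet.mpr (by omega))
              rw [hg, hmu, sg_apply_ne (u := vx n) (by simp only [vx_val]; omega),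
                sg_apply_ne (u := vy n i) (by simp only [vy_val]; omega),
                sg_apply_eq (u := vy n j) (by simp only [vy_val]; omega),
                sg_apply_ne (u := vz1 n) (by simp only [vz1_val]; omega),
                sg_apply_eq (u := b) rfl, sg_apply_eq (u := d) (w := b) (by omega)] at h
              omega
        · -- case 1 ≤ i, j = i+1
          have hj4 : (j : ℕ) = (i : ℕ) + 1 := by omega
          have hB : (b : ℕ) = (i : ℕ) + 2 ∨ (b : ℕ) = (i : ℕ) + 3 := by
            by_contra hcb; push_neg at hcb
            have h := hcon b (mem_VarSet.mpr (by omega))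
            rw [hg, hmu, sg_apply_ne (u := vx n) (by simp only [vx_val]; omega),
              sg_apply_ne (u := vy n i) (by simp only [vy_val]; omega),
              sg_apply_ne (u := vy n j) (by simp only [vy_val]; omega),
              sg_apply_ne (u := vz1 n) (by simp only [vz1_val]; omega),
              sg_apply_eq (u := b) rfl] at h
            omega
          have hD : (d : ℕ) = (i : ℕ) + 2 ∨ (d : ℕ) = (i : ℕ) + 3 := by
            by_contra hcb; push_neg at hcb
            have h := hcon d (mem_VarSet.mpr (by omega))
            rw [hg, hmu, sg_apply_ne (u := vx n) (by simp only [vx_val]; omega),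
              sg_apply_ne (u := vy n i) (by simp only [vy_val]; omega),
              sg_apply_ne (u := vy n j) (by simp only [vy_val]; omega),
              sg_apply_ne (u := vz1 n) (by simp only [vz1_val]; omega),
              sg_apply_eq (u := d) rfl] at h
            omega
          have hA : (a : ℕ) = 1 := by
            by_contra hca
            have h := hcon a (mem_VarSet.mpr (by omega))
            rw [hg, hmu, sg_apply_ne (u := vx n) (by simp only [vx_val]; omega),
              sg_apply_ne (u := vy n i) (by simp only [vy_val]; omega),
              sg_apply_ne (u := vy n j) (by simp only [vy_val]; omega),
              sg_apply_ne (u := vz1 n) (by simp only [vz1_val]; omega),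
              sg_apply_eq (u := a) rfl] at h
            omega
          have hC : (c : ℕ) = 1 := by
            by_contra hca
            have h := hcon c (mem_VarSet.mpr (by omega))
            rw [hg, hmu, sg_apply_ne (u := vx n) (by simp only [vx_val]; omega),
              sg_apply_ne (u := vy n i) (by simp only [vy_val]; omega),
              sg_apply_ne (u := vy n j) (by simp only [vy_val]; omega),
              sg_apply_ne (u := vz1 n) (by simp only [vz1_val]; omega),
              sg_apply_eq (u := c) rfl] at h
            omega
          have h := hcon (vz1 n) (mem_VarSet.mpr (Or.inr (Or.inl ⟨rfl, by omega⟩)))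
          rw [hg, hmu, sg_apply_ne (u := vx n) (by simp only [vx_val, vz1_val]; omega),
            sg_apply_ne (u := vy n i) (by simp only [vy_val, vz1_val]; omega),
            sg_apply_ne (u := vy n j) (by simp only [vy_val, vz1_val]; omega),
            sg_apply_eq (u := vz1 n) rfl,
            sg_apply_eq (u := a) (by simp only [vz1_val]; omega),
            sg_apply_eq (u := c) (by simp only [vz1_val]; omega)] at h
          omega
  · -- family x z₁ z₂ y_l : witness z₂
    have hl := l.isLt
    refine ⟨vz2 n, mem_VarSet.mpr (Or.inl rfl), ?_⟩
    rw [hmu, hg4, sg_apply_ne (u := vx n) (by simp only [vx_val, vz2_val]; omega),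
      sg_apply_ne (u := vy n i) (by simp only [vy_val, vz2_val]; omega),
      sg_apply_ne (u := vy n j) (by simp only [vy_val, vz2_val]; omega),
      sg_apply_ne (u := vz1 n) (by simp only [vz1_val, vz2_val]; omega),
      sg_apply_eq (u := vz2 n) rfl]
    omega
  · -- family x y_k y_l z₂ : witness z₂
    refine ⟨vz2 n, mem_VarSet.mpr (Or.inl rfl), ?_⟩
    rw [hmu, hg4, sg_apply_ne (u := vx n) (by simp only [vx_val, vz2_val]; omega),
      sg_apply_ne (u := vy n i) (by simp only [vy_val, vz2_val]; omega),
      sg_apply_ne (u := vy n j) (by simp only [vy_val, vz2_val]; omega),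
      sg_apply_ne (u := vz1 n) (by simp only [vz1_val, vz2_val]; omega),
      sg_apply_eq (u := vz2 n) rfl]
    omega
  · -- family x y_i' y_j' z₁
    have hi' := i'.isLt
    have hj' := j'.isLt
    have h1n : (i' : ℕ) ≤ (j' : ℕ) := h1
    rcases h3 with h3 | ⟨hj'j, h3⟩
    · -- j < j' : witness y_j'
      have h3n : (j : ℕ) < (j' : ℕ) := h3
      refine ⟨vy n j', mem_VarSet.mpr (Or.inr (Or.inr
        (by simp only [vy_val]; omega))), ?_⟩
      rw [hmu, hg4, sg_apply_ne (u := vx n) (by simp only [vx_val, vy_val]; omega),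
        sg_apply_ne (u := vy n i) (by simp only [vy_val]; omega),
        sg_apply_ne (u := vy n j) (by simp only [vy_val]; omega),
        sg_apply_ne (u := vz1 n) (by simp only [vz1_val, vy_val]; omega),
        sg_apply_eq (u := vy n j') rfl]
      omega
    · -- j' = j, i < i'
      have h3n : (i : ℕ) < (i' : ℕ) := h3
      have hj'jn : (j' : ℕ) = (j : ℕ) := by rw [hj'j]
      by_cases hlt : (i' : ℕ) < (j : ℕ)
      · refine ⟨vy n i', mem_VarSet.mpr (Or.inr (Or.inr
          (by simp only [vy_val]; omega))), ?_⟩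
        rw [hmu, hg4, sg_apply_ne (u := vx n) (by simp only [vx_val, vy_val]; omega),
          sg_apply_ne (u := vy n i) (by simp only [vy_val]; omega),
          sg_apply_ne (u := vy n j) (by simp only [vy_val]; omega),
          sg_apply_ne (u := vz1 n) (by simp only [vz1_val, vy_val]; omega),
          sg_apply_eq (u := vy n i') rfl]
        omega
      · -- i' = j : witness y_j, count 2 > 1
        have hieq : (i' : ℕ) = (j : ℕ) := by omega
        have hij3 : (i : ℕ) < (j : ℕ) := by omega
        refine ⟨vy n j, mem_VarSet.mpr (Or.inr (Or.inr
          (by simp only [vy_val]; omega))), ?_⟩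
        rw [hmu, hg4, sg_apply_ne (u := vx n) (by simp only [vx_val, vy_val]; omega),
          sg_apply_ne (u := vy n i) (by simp only [vy_val]; omega),
          sg_apply_eq (u := vy n j) rfl,
          sg_apply_ne (u := vz1 n) (by simp only [vz1_val, vy_val]; omega),
          sg_apply_eq (u := vy n i') (w := vy n j) (by simp only [vy_val]; omega),
          sg_apply_eq (u := vy n j') (w := vy n j) (by simp only [vy_val]; omega)]
        omega

lemma keyB (n : ℕ) (hn : 2 ≤ n) (i j : Fin n) (hij : i ≤ j)
    (h11 : ¬((i : ℕ) = 0 ∧ (j : ℕ) = 0)) :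
    ∀ v ∈ VarSet n i j, ∃ g ∈ GenSet n i j, g ≤ muE n i j + sg v := by
  have hi := i.isLt
  have hj := j.isLt
  have hijn : (i : ℕ) ≤ (j : ℕ) := hij
  intro v hv
  rcases hv with hv | ⟨hv, hi1⟩ | ⟨hv2, hvn, hv3⟩
  · -- v = z₂ : use x z₁ z₂ y_i
    refine ⟨sg (vx n) + sg (vz1 n) + sg (vz2 n) + sg (vy n i),
      Or.inl (Or.inl (Or.inr ⟨i, rfl⟩)), ?_⟩
    rw [Finsupp.le_def]
    intro w
    simp only [muE, Finsupp.add_apply, sg_apply]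
    split_ifs <;> simp only [vx_val, vz1_val, vz2_val, vy_val] at * <;> omega
  · -- v = z₁, 1 ≤ i : use (z₁ y_i)(z₁ y_j)
    refine ⟨sg (vz1 n) + sg (vy n i) + sg (vz1 n) + sg (vy n j),
      Or.inl (Or.inl (Or.inl ⟨vz1 n, vy n i, vz1 n, vy n j, by simp only [vx_val, vz1_val, vz2_val, vy_val]; omega, by simp only [vx_val, vz1_val, vz2_val, vy_val]; omega,
        by simp only [vx_val, vz1_val, vz2_val, vy_val]; omega, by simp only [vx_val, vz1_val, vz2_val, vy_val]; omega, rfl⟩)), ?_⟩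
    rw [Finsupp.le_def]
    intro w
    simp only [muE, Finsupp.add_apply, sg_apply]
    split_ifs <;> simp only [vx_val, vz1_val, vz2_val, vy_val] at * <;> omega
  · -- v = y_l with 2 ≤ v ≤ n+1
    have hln : (v : ℕ) - 2 < n := by omega
    set l : Fin n := ⟨(v : ℕ) - 2, hln⟩ with hl
    have hvl : ((l : Fin n) : ℕ) = (v : ℕ) - 2 := rfl
    rcases hv3 with hgt | ⟨hle, himp⟩
    · -- i < l
      by_cases hlj : (l : ℕ) ≤ (j : ℕ)
      · -- use x y_l y_j z₁, family 4 with (l, j)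
        refine ⟨sg (vx n) + sg (vy n l) + sg (vy n j) + sg (vz1 n),
          Or.inr ⟨l, j, by exact hlj, by omega, Or.inr ⟨rfl, by show (i:ℕ) < (l:ℕ); omega⟩, rfl⟩, ?_⟩
        rw [Finsupp.le_def]
        intro w
        simp only [muE, Finsupp.add_apply, sg_apply]
        split_ifs <;> simp only [vx_val, vz1_val, vz2_val, vy_val] at * <;> omega
      · -- j < l : use x y_i y_l z₁, family 4 with (i, l)
        refine ⟨sg (vx n) + sg (vy n i) + sg (vy n l) + sg (vz1 n),
          Or.inr ⟨i, l, by show (i:ℕ) ≤ (l:ℕ); omega, by omega,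
            Or.inl (by show (j:ℕ) < (l:ℕ); omega), rfl⟩, ?_⟩
        rw [Finsupp.le_def]
        intro w
        simp only [muE, Finsupp.add_apply, sg_apply]
        split_ifs <;> simp only [vx_val, vz1_val, vz2_val, vy_val] at * <;> omega
    · -- v ≤ j, i.e. l + 2 ≤ j
      by_cases hli : (l : ℕ) = (i : ℕ)
      · -- l = i, so 1 ≤ i and i + 2 ≤ j : use (z₁ y_i)(y_i y_j)
        have hi1 : 1 ≤ (i : ℕ) := himp (by omega)
        refine ⟨sg (vz1 n) + sg (vy n i) + sg (vy n i) + sg (vy n j),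
          Or.inl (Or.inl (Or.inl ⟨vz1 n, vy n i, vy n i, vy n j, by simp only [vx_val, vz1_val, vz2_val, vy_val]; omega, by simp only [vx_val, vz1_val, vz2_val, vy_val]; omega,
            by simp only [vx_val, vz1_val, vz2_val, vy_val]; omega, by simp only [vx_val, vz1_val, vz2_val, vy_val]; omega, rfl⟩)), ?_⟩
        rw [Finsupp.le_def]
        intro w
        simp only [muE, Finsupp.add_apply, sg_apply]
        split_ifs <;> simp only [vx_val, vz1_val, vz2_val, vy_val] at * <;> omega
      · -- l < i (or l > i impossible here? l ≠ i, l+2 ≤ j; if l > i use first case anyway)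
        by_cases hgt : (i : ℕ) < (l : ℕ)
        · -- use x y_l y_j z₁ again (l ≤ j since l + 2 ≤ j)
          refine ⟨sg (vx n) + sg (vy n l) + sg (vy n j) + sg (vz1 n),
            Or.inr ⟨l, j, by show (l:ℕ) ≤ (j:ℕ); omega, by omega,
              Or.inr ⟨rfl, by show (i:ℕ) < (l:ℕ); omega⟩, rfl⟩, ?_⟩
          rw [Finsupp.le_def]
          intro w
          simp only [muE, Finsupp.add_apply, sg_apply]
          split_ifs <;> simp only [vx_val, vz1_val, vz2_val, vy_val] at * <;> omega
        · -- l < i : use (z₁ y_i)(y_l y_j)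
          have hi1 : 1 ≤ (i : ℕ) := by omega
          refine ⟨sg (vz1 n) + sg (vy n i) + sg (vy n l) + sg (vy n j),
            Or.inl (Or.inl (Or.inl ⟨vz1 n, vy n i, vy n l, vy n j, by simp only [vx_val, vz1_val, vz2_val, vy_val]; omega, by simp only [vx_val, vz1_val, vz2_val, vy_val]; omega,
              by simp only [vx_val, vz1_val, vz2_val, vy_val]; omega, by simp only [vx_val, vz1_val, vz2_val, vy_val]; omega, rfl⟩)), ?_⟩
          rw [Finsupp.le_def]
          intro w
          simp only [muE, Finsupp.add_apply, sg_apply]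
          split_ifs <;> simp only [vx_val, vz1_val, vz2_val, vy_val] at * <;> omega

/-- Fix `1 ≤ i ≤ j ≤ n` with `(i,j) ≠ (1,1)`. The colon ideal
`I' : (x y_i y_j z₁)` is generated by a subset of the variables. -/
theorem stage2c_colon (K : Type*) [Field K] (n : ℕ) (hn : 2 ≤ n) (i j : Fin n)
    (hij : i ≤ j) (h11 : ¬((i : ℕ) = 0 ∧ (j : ℕ) = 0)) :
    ∃ S : Set (Fin (n + 3)),
      ((Jideal K n ^ 2 +
          Ideal.span { m | ∃ l : Fin n,
            m = X (vx n) * X (vz1 n) * X (vz2 n) * X (vy n l) } +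
          Ideal.span { m | ∃ k l : Fin n, k ≤ l ∧
            ¬((k : ℕ) = n - 1 ∧ (l : ℕ) = n - 1) ∧
            m = X (vx n) * X (vy n k) * X (vy n l) * X (vz2 n) } +
          Ideal.span { m | ∃ i' j' : Fin n, i' ≤ j' ∧
            ¬((i' : ℕ) = 0 ∧ (j' : ℕ) = 0) ∧
            (j < j' ∨ (j' = j ∧ i < i')) ∧
            m = X (vx n) * X (vy n i') * X (vy n j') * X (vz1 n) }).colon
        ((Ideal.span {X (vx n) * X (vy n i) * X (vy n j) * X (vz1 n)} :
          Ideal (MvPolynomial (Fin (n + 3)) K)) : Set (MvPolynomial (Fin (n + 3)) K))) =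
      Ideal.span (MvPolynomial.X '' S) := by
  classical
  refine ⟨VarSet n i j, ?_⟩
  have hμ : (X (vx n) * X (vy n i) * X (vy n j) * X (vz1 n) : MvPolynomial (Fin (n+3)) K)
      = monomial (muE n i j) 1 := X_mul_four _ _ _ _
  ext p
  rw [Ideal.mem_colon_span_singleton, hμ, spanEq K n i j, mem_ideal_span_monomial_image,
    mem_ideal_span_X_image]
  constructor
  · intro h e he
    have hμle : muE n i j ≤ e + muE n i j := le_add_self
    have hco : coeff (e + muE n i j) (p * monomial (muE n i j) 1) = coeff e p := by
      rw [coeff_mul_monomial', if_pos hμle, add_tsub_cancel_right, mul_one]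
    obtain ⟨g, hgG, hge⟩ := h (e + muE n i j)
      (by rw [mem_support_iff, hco]; exact mem_support_iff.mp he)
    obtain ⟨v, hvS, hlt⟩ := keyA n hn i j hij h11 g hgG
    refine ⟨v, hvS, ?_⟩
    have h1 := Finsupp.le_def.mp hge v
    rw [Finsupp.add_apply] at h1
    omega
  · intro h e he
    rw [mem_support_iff, coeff_mul_monomial'] at he
    by_cases hle : muE n i j ≤ e
    · rw [if_pos hle, mul_one] at he
      obtain ⟨v, hvS, hv0⟩ := h (e - muE n i j) (mem_support_iff.mpr he)
      obtain ⟨g, hgG, hgle⟩ := keyB n hn i j hij h11 v hvS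
      refine ⟨g, hgG, ?_⟩
      rw [Finsupp.le_def]
      intro w
      have h1 := Finsupp.le_def.mp hgle w
      have h2 := Finsupp.le_def.mp hle w
      have h3 : (e - muE n i j) v = e v - muE n i j v := Finsupp.tsub_apply _ _ _
      rw [Finsupp.add_apply, sg_apply] at h1
      by_cases hvw : (v : ℕ) = (w : ℕ)
      · have hvw2 : v = w := Fin.ext hvw
        subst hvw2
        rw [if_pos rfl] at h1
        omega
      · rw [if_neg hvw] at h1
        omega
    · rw [if_neg hle] at he
      exact absurd rfl he
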